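/- For every 0 ≤ s ≤ t ≤ T with t > 0, the conditional expectation of B_s given the path σ-algebra of B on [t,T] is E[B_s | F̄^B_{t,T}] = (s/t) · B_t almost surely. -/

import Mathlib

open MeasureTheory ProbabilityTheory Real
open scoped NNReal ENNReal

section Helpers

variable {Ω : Type*}

lemma my_indep_mono {mΩ : MeasurableSpace Ω} {μ : Measure Ω}
    {m₁ m₂ m₁' m₂' : MeasurableSpace Ω}
    (h : Indep m₁ m₂ μ) (h1 : m₁' ≤ m₁) (h2 : m₂' ≤ m₂) : Indep m₁' m₂' μ := by
  rw [Indep_iff] at h ⊢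
  exact fun t1 t2 ht1 ht2 => h t1 t2 (h1 _ ht1) (h2 _ ht2)

lemma my_indep_sup_right {mΩ : MeasurableSpace Ω} {μ : Measure Ω} [IsProbabilityMeasure μ]
    {m n k : MeasurableSpace Ω} (hm : m ≤ mΩ) (hn : n ≤ mΩ) (hk : k ≤ mΩ)
    (h1 : Indep m n μ) (h2 : Indep (m ⊔ n) k μ) : Indep m (n ⊔ k) μ := by
  set p1 : Set (Set Ω) := {s | MeasurableSet[m] s} with hp1def
  set p2 : Set (Set Ω) := {u | ∃ A B, MeasurableSet[n] A ∧ MeasurableSet[k] B ∧ u = A ∩ B}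
    with hp2def
  have hgen1 : m = MeasurableSpace.generateFrom p1 :=
    (@MeasurableSpace.generateFrom_measurableSet Ω m).symm
  have hgen2 : n ⊔ k = MeasurableSpace.generateFrom p2 := by
    refine le_antisymm ?_ ?_
    · refine sup_le ?_ ?_
      · intro A hA
        exact MeasurableSpace.measurableSet_generateFrom
          ⟨A, Set.univ, hA, MeasurableSet.univ, by simp⟩
      · intro B hB
        exact MeasurableSpace.measurableSet_generateFrom
          ⟨Set.univ, B, MeasurableSet.univ, hB, by simp⟩
    · refine MeasurableSpace.generateFrom_le ?_
      rintro u ⟨A, B, hA, hB, rfl⟩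
      exact ((le_sup_left : n ≤ n ⊔ k) _ hA).inter ((le_sup_right : k ≤ n ⊔ k) _ hB)
  have hpi1 : IsPiSystem p1 := fun s hs t ht _ => hs.inter ht
  have hpi2 : IsPiSystem p2 := by
    rintro u ⟨A, B, hA, hB, rfl⟩ u' ⟨A', B', hA', hB', rfl⟩ _
    exact ⟨A ∩ A', B ∩ B', hA.inter hA', hB.inter hB', by rw [Set.inter_inter_inter_comm]⟩
  refine IndepSets.indep hm (sup_le hn hk) hpi1 hpi2 hgen1 hgen2 ((IndepSets_iff _ _ _).2 ?_)
  rintro C u hC ⟨A, B, hA, hB, rfl⟩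
  rw [Indep_iff] at h1 h2
  have e1 : μ ((C ∩ A) ∩ B) = μ (C ∩ A) * μ B :=
    h2 (C ∩ A) B (((le_sup_left : m ≤ m ⊔ n) _ hC).inter ((le_sup_right : n ≤ m ⊔ n) _ hA)) hB
  have e2 : μ (C ∩ A) = μ C * μ A := h1 C A hC hA
  have e3 : μ (A ∩ B) = μ A * μ B := h2 A B ((le_sup_right : n ≤ m ⊔ n) _ hA) hB
  calc μ (C ∩ (A ∩ B)) = μ ((C ∩ A) ∩ B) := by rw [Set.inter_assoc]
    _ = μ C * μ A * μ B := by rw [e1, e2]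
    _ = μ C * μ (A ∩ B) := by rw [e3, mul_assoc]

lemma my_pdf_factor {a b : ℝ} (ha : 0 < a) (hb : 0 < b) (u y : ℝ) :
    gaussianPDFReal 0 a.toNNReal u * gaussianPDFReal 0 b.toNNReal (y - u)
      = gaussianPDFReal 0 (a * b / (a + b)).toNNReal (u - (a / (a + b)) * y)
        * gaussianPDFReal 0 (a + b).toNNReal y := by
  have hab : 0 < a + b := by linarith
  have hσ : 0 < a * b / (a + b) := by positivity
  simp only [gaussianPDFReal, sub_zero,
    Real.coe_toNNReal _ ha.le, Real.coe_toNNReal _ hb.le,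
    Real.coe_toNNReal _ hσ.le, Real.coe_toNNReal _ hab.le]
  rw [mul_mul_mul_comm, ← Real.exp_add, mul_mul_mul_comm (√(2 * π * (a * b / (a + b))))⁻¹,
    ← Real.exp_add, ← mul_inv, ← mul_inv, ← Real.sqrt_mul (by positivity),
    ← Real.sqrt_mul (by positivity)]
  have h1 : 2 * π * a * (2 * π * b) = 2 * π * (a * b / (a + b)) * (2 * π * (a + b)) := by
    field_simp
  have h2 : -u ^ 2 / (2 * a) + -(y - u) ^ 2 / (2 * b)
      = -(u - a / (a + b) * y) ^ 2 / (2 * (a * b / (a + b))) + -y ^ 2 / (2 * (a + b)) := by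
    field_simp
    ring
  rw [h1, h2]

lemma my_integrable_gauss_aux {v : ℝ≥0} (hv : v ≠ 0) :
    Integrable (fun x : ℝ => x * gaussianPDFReal 0 v x) := by
  have hv' : (0:ℝ) < v := NNReal.coe_pos.mpr (pos_iff_ne_zero.mpr hv)
  have heq : (fun x : ℝ => x * gaussianPDFReal 0 v x)
      = fun x : ℝ => (√(2 * π * v))⁻¹ * (x * Real.exp (-(2 * (v:ℝ))⁻¹ * x ^ 2)) := by
    funext x
    simp only [gaussianPDFReal, sub_zero]
    rw [show -x ^ 2 / (2 * (v:ℝ)) = -(2 * (v:ℝ))⁻¹ * x ^ 2 by field_simp]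
    ring
  rw [heq]
  exact (integrable_mul_exp_neg_mul_sq (by positivity)).const_mul _

lemma my_integrable_id_gauss {v : ℝ≥0} (hv : v ≠ 0) :
    Integrable (fun x : ℝ => x) (gaussianReal 0 v) := by
  rw [gaussianReal_of_var_ne_zero 0 hv]
  rw [integrable_withDensity_iff (measurable_gaussianPDF 0 v)
    (Filter.Eventually.of_forall fun x => ENNReal.ofReal_lt_top)]
  have : (fun x : ℝ => x * (gaussianPDF 0 v x).toReal)
      = fun x : ℝ => x * gaussianPDFReal 0 v x := by
    funext x
    rw [gaussianPDF, ENNReal.toReal_ofReal (gaussianPDFReal_nonneg 0 v x)]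
  rw [this]
  exact my_integrable_gauss_aux hv

lemma my_integral_id_gauss {v : ℝ≥0} (hv : v ≠ 0) :
    ∫ x, x ∂(gaussianReal 0 v) = 0 := by
  rw [gaussianReal_of_var_ne_zero 0 hv]
  have hd : (gaussianPDF 0 v) = fun x => ((gaussianPDFReal 0 v x).toNNReal : ℝ≥0∞) := by
    funext x; rfl
  rw [hd, integral_withDensity_eq_integral_smul
    (by exact (measurable_gaussianPDFReal 0 v).real_toNNReal) (fun x : ℝ => x)]
  have heq : (fun x : ℝ => (gaussianPDFReal 0 v x).toNNReal • x)
      = fun x : ℝ => x * gaussianPDFReal 0 v x := by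
    funext x
    rw [NNReal.smul_def, smul_eq_mul, Real.coe_toNNReal _ (gaussianPDFReal_nonneg 0 v x)]
    ring
  rw [heq]
  set f : ℝ → ℝ := fun x : ℝ => x * gaussianPDFReal 0 v x with hf
  have hodd : ∀ x, f (-x) = - f x := by
    intro x
    simp only [hf, gaussianPDFReal, sub_zero]
    ring_nf
  have h1 : ∫ x, f (-x) = ∫ x, f x := integral_neg_eq_self f volume
  have h2 : ∫ x, f (-x) = - ∫ x, f x := by
    simp_rw [hodd]; exact integral_neg f
  linarith [h1.symm.trans h2]

lemma my_lint_shift (F : ℝ → ℝ≥0∞) (hF : Measurable F) (r : ℝ) :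
    ∫⁻ x, F (r + x) = ∫⁻ x, F x := by
  conv_rhs => rw [← map_add_left_eq_self volume r]
  rw [lintegral_map hF (measurable_const_add r)]

lemma my_lint_shift' (F : ℝ → ℝ≥0∞) (hF : Measurable F) (r : ℝ) :
    ∫⁻ x, F (x - r) = ∫⁻ x, F x := by
  have : (fun x : ℝ => F (x - r)) = fun x => F (-r + x) := by
    funext x; ring_nf
  rw [this, my_lint_shift F hF (-r)]

lemma my_pdf_factor_ennreal {a b : ℝ} (ha : 0 < a) (hb : 0 < b) (u y : ℝ) :
    gaussianPDF 0 a.toNNReal u * gaussianPDF 0 b.toNNReal (y - u)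
      = gaussianPDF 0 (a * b / (a + b)).toNNReal (u - (a / (a + b)) * y)
        * gaussianPDF 0 (a + b).toNNReal y := by
  simp only [gaussianPDF]
  rw [← ENNReal.ofReal_mul (gaussianPDFReal_nonneg _ _ _),
    ← ENNReal.ofReal_mul (gaussianPDFReal_nonneg _ _ _), my_pdf_factor ha hb u y]

lemma my_gauss_factor {a b : ℝ} (ha : 0 < a) (hb : 0 < b) {A A' : Set ℝ}
    (hA : MeasurableSet A) (hA' : MeasurableSet A') :
    ((gaussianReal 0 a.toNNReal).prod (gaussianReal 0 b.toNNReal))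
      {p : ℝ × ℝ | p.1 - (a / (a + b)) * (p.1 + p.2) ∈ A ∧ p.1 + p.2 ∈ A'}
    = (gaussianReal 0 (a * b / (a + b)).toNNReal A) * (gaussianReal 0 (a + b).toNNReal A') := by
  have hab : 0 < a + b := by linarith
  have hσ : 0 < a * b / (a + b) := by positivity
  have ha' : a.toNNReal ≠ 0 := by simp [Real.toNNReal_eq_zero, not_le, ha]
  have hb' : b.toNNReal ≠ 0 := by simp [Real.toNNReal_eq_zero, not_le, hb]
  have hab' : (a + b).toNNReal ≠ 0 := by simp [Real.toNNReal_eq_zero, not_le, hab]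
  have hσ' : (a * b / (a + b)).toNNReal ≠ 0 := by simp [Real.toNNReal_eq_zero, not_le, hσ]
  set c : ℝ := a / (a + b) with hc
  set S : Set (ℝ × ℝ) := {p : ℝ × ℝ | p.1 - c * (p.1 + p.2) ∈ A ∧ p.1 + p.2 ∈ A'} with hS
  set fa := gaussianPDF 0 a.toNNReal
  set fb := gaussianPDF 0 b.toNNReal
  set ψ := gaussianPDF 0 (a * b / (a + b)).toNNReal
  set φ := gaussianPDF 0 (a + b).toNNReal
  set I1 : ℝ → ℝ≥0∞ := A.indicator 1 with hI1
  set I2 : ℝ → ℝ≥0∞ := A'.indicator 1 with hI2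
  have hI1m : Measurable I1 := measurable_one.indicator hA
  have hI2m : Measurable I2 := measurable_one.indicator hA'
  have hfam : Measurable fa := measurable_gaussianPDF _ _
  have hfbm : Measurable fb := measurable_gaussianPDF _ _
  have hψm : Measurable ψ := measurable_gaussianPDF _ _
  have hφm : Measurable φ := measurable_gaussianPDF _ _
  have hSm : MeasurableSet S := by
    have hF : Measurable (fun p : ℝ × ℝ => (p.1 - c * (p.1 + p.2), p.1 + p.2)) :=
      (measurable_fst.sub (measurable_const.mul (measurable_fst.add measurable_snd))).prodMk
        (measurable_fst.add measurable_snd)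
    exact hF (hA.prod hA')
  have hKA : (gaussianReal 0 (a * b / (a + b)).toNNReal) A = ∫⁻ x, I1 x * ψ x := by
    rw [gaussianReal_of_var_ne_zero _ hσ', withDensity_apply _ hA, ← lintegral_indicator hA]
    refine lintegral_congr fun x => ?_
    by_cases hx : x ∈ A <;> simp [hI1, Set.indicator_apply, hx, ψ]
  have hKA' : (gaussianReal 0 (a + b).toNNReal) A' = ∫⁻ y, I2 y * φ y := by
    rw [gaussianReal_of_var_ne_zero _ hab', withDensity_apply _ hA', ← lintegral_indicator hA']
    refine lintegral_congr fun y => ?_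
    by_cases hy : y ∈ A' <;> simp [hI2, Set.indicator_apply, hy, φ]
  rw [Measure.prod_apply hSm]
  have hslice : ∀ u : ℝ, (gaussianReal 0 b.toNNReal) (Prod.mk u ⁻¹' S)
      = ∫⁻ v, I1 (u - c * (u + v)) * I2 (u + v) * fb v := by
    intro u
    have hEm : MeasurableSet (Prod.mk u ⁻¹' S) := measurable_prodMk_left hSm
    rw [gaussianReal_of_var_ne_zero _ hb', withDensity_apply _ hEm, ← lintegral_indicator hEm]
    refine lintegral_congr fun v => ?_
    by_cases hv : v ∈ Prod.mk u ⁻¹' S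
    · have h1 : u - c * (u + v) ∈ A := hv.1
      have h2 : u + v ∈ A' := hv.2
      simp [Set.indicator_apply, hv, hI1, hI2, h1, h2, fb]
    · rw [Set.indicator_of_notMem hv]
      rcases not_and_or.mp hv with h | h
      · simp [hI1, Set.indicator_apply, h]
      · simp [hI2, Set.indicator_apply, h]
  rw [lintegral_congr hslice]
  have houter : ∫⁻ u, (∫⁻ v, I1 (u - c * (u + v)) * I2 (u + v) * fb v)
        ∂(gaussianReal 0 a.toNNReal)
      = ∫⁻ u, fa u * ∫⁻ v, I1 (u - c * (u + v)) * I2 (u + v) * fb v := by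
    rw [gaussianReal_of_var_ne_zero _ ha',
      lintegral_withDensity_eq_lintegral_mul _ hfam]
    · rfl
    · refine Measurable.lintegral_prod_right ?_
      exact ((hI1m.comp (measurable_fst.sub (measurable_const.mul
        (measurable_fst.add measurable_snd)))).mul
        (hI2m.comp (measurable_fst.add measurable_snd))).mul (hfbm.comp measurable_snd)
  rw [houter]
  have hshear : ∀ u : ℝ, (∫⁻ v, I1 (u - c * (u + v)) * I2 (u + v) * fb v)
      = ∫⁻ y, I1 (u - c * y) * I2 y * fb (y - u) := by
    intro u
    have hFm : Measurable (fun y => I1 (u - c * y) * I2 y * fb (y - u)) :=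
      ((hI1m.comp (measurable_const.sub (measurable_const.mul measurable_id))).mul hI2m).mul
        (hfbm.comp (measurable_id.sub measurable_const))
    rw [← my_lint_shift _ hFm u]
    refine lintegral_congr fun v => ?_
    simp only [add_sub_cancel_left]
  simp_rw [hshear]
  have hinner_m : ∀ u : ℝ, Measurable (fun y => I1 (u - c * y) * I2 y * fb (y - u)) := fun u =>
    ((hI1m.comp (measurable_const.sub (measurable_const.mul measurable_id))).mul hI2m).mul
      (hfbm.comp (measurable_id.sub measurable_const))
  have hpush : ∀ u : ℝ, fa u * ∫⁻ y, I1 (u - c * y) * I2 y * fb (y - u)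
      = ∫⁻ y, fa u * (I1 (u - c * y) * I2 y * fb (y - u)) := fun u =>
    (lintegral_const_mul _ (hinner_m u)).symm
  simp_rw [hpush]
  have hum : Measurable (Function.uncurry fun u y : ℝ =>
      fa u * (I1 (u - c * y) * I2 y * fb (y - u))) := by
    apply Measurable.mul
    · exact hfam.comp measurable_fst
    · exact ((hI1m.comp (measurable_fst.sub (measurable_const.mul measurable_snd))).mul
        (hI2m.comp measurable_snd)).mul (hfbm.comp (measurable_snd.sub measurable_fst))
  rw [lintegral_lintegral_swap hum.aemeasurable]
  have hfix : ∀ y : ℝ, (∫⁻ u, fa u * (I1 (u - c * y) * I2 y * fb (y - u)))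
      = I2 y * φ y * ∫⁻ x, I1 x * ψ x := by
    intro y
    have hpt : ∀ u : ℝ, fa u * (I1 (u - c * y) * I2 y * fb (y - u))
        = I2 y * φ y * (I1 (u - c * y) * ψ (u - c * y)) := by
      intro u
      have := my_pdf_factor_ennreal ha hb u y
      calc fa u * (I1 (u - c * y) * I2 y * fb (y - u))
          = (fa u * fb (y - u)) * I1 (u - c * y) * I2 y := by ring
        _ = (ψ (u - c * y) * φ y) * I1 (u - c * y) * I2 y := by rw [this]
        _ = I2 y * φ y * (I1 (u - c * y) * ψ (u - c * y)) := by ring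
    simp_rw [hpt]
    have hm2 : Measurable fun u : ℝ => I1 (u - c * y) * ψ (u - c * y) :=
      (hI1m.comp (measurable_id.sub measurable_const)).mul
        (hψm.comp (measurable_id.sub measurable_const))
    rw [lintegral_const_mul _ hm2]
    congr 1
    exact my_lint_shift' (fun x => I1 x * ψ x) (hI1m.mul hψm) (c * y)
  simp_rw [hfix]
  rw [lintegral_mul_const (f := fun y => I2 y * φ y) _ (hI2m.mul hφm), hKA, hKA', mul_comm]

lemma my_indepFun_gauss {mΩ : MeasurableSpace Ω} (μ : Measure Ω)
    [IsProbabilityMeasure μ] {U V : Ω → ℝ} (hU : Measurable U) (hV : Measurable V)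
    (hUV : IndepFun U V μ) {a b : ℝ} (ha : 0 < a) (hb : 0 < b)
    (hUlaw : μ.map U = gaussianReal 0 a.toNNReal)
    (hVlaw : μ.map V = gaussianReal 0 b.toNNReal) :
    IndepFun (fun ω => U ω - (a / (a + b)) * (U ω + V ω)) (fun ω => U ω + V ω) μ := by
  set c : ℝ := a / (a + b) with hc
  set X : Ω → ℝ := fun ω => U ω - c * (U ω + V ω) with hX
  set Y : Ω → ℝ := fun ω => U ω + V ω with hY
  have hmap : μ.map (fun ω => (U ω, V ω))
      = (gaussianReal 0 a.toNNReal).prod (gaussianReal 0 b.toNNReal) := by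
    rw [← hUlaw, ← hVlaw]
    exact (indepFun_iff_map_prod_eq_prod_map_map hU.aemeasurable hV.aemeasurable).mp hUV
  have key : ∀ {A A' : Set ℝ}, MeasurableSet A → MeasurableSet A' →
      μ (X ⁻¹' A ∩ Y ⁻¹' A')
        = (gaussianReal 0 (a * b / (a + b)).toNNReal) A
          * (gaussianReal 0 (a + b).toNNReal) A' := by
    intro A A' hA hA'
    set S : Set (ℝ × ℝ) := {p : ℝ × ℝ | p.1 - c * (p.1 + p.2) ∈ A ∧ p.1 + p.2 ∈ A'} with hS
    have hSm : MeasurableSet S := by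
      have hF : Measurable (fun p : ℝ × ℝ => (p.1 - c * (p.1 + p.2), p.1 + p.2)) :=
        (measurable_fst.sub (measurable_const.mul (measurable_fst.add measurable_snd))).prodMk
          (measurable_fst.add measurable_snd)
      exact hF (hA.prod hA')
    have hpre : X ⁻¹' A ∩ Y ⁻¹' A' = (fun ω => (U ω, V ω)) ⁻¹' S := by
      ext ω; simp [hS, hX, hY, Set.mem_preimage]
    rw [hpre, ← Measure.map_apply (hU.prodMk hV) hSm, hmap, hS]
    exact my_gauss_factor ha hb hA hA'
  rw [indepFun_iff_measure_inter_preimage_eq_mul]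
  intro A A' hA hA'
  have h1 : μ (X ⁻¹' A) = (gaussianReal 0 (a * b / (a + b)).toNNReal) A := by
    have := key hA MeasurableSet.univ
    simpa [measure_univ] using this
  have h2 : μ (Y ⁻¹' A') = (gaussianReal 0 (a + b).toNNReal) A' := by
    have := key MeasurableSet.univ hA'
    simpa [measure_univ] using this
  rw [key hA hA', h1, h2]

end Helpers

/-- The σ-algebra generated by the path of `B` over `[s,t]`: `σ(B_u : s ≤ u ≤ t)`. -/
def pathSigma {Ω : Type*} (B : ℝ → Ω → ℝ) (s t : ℝ) : MeasurableSpace Ω :=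
  ⨆ (u : ℝ) (_ : u ∈ Set.Icc s t),
    MeasurableSpace.comap (B u) Real.measurableSpace

section PathSigma

variable {Ω : Type*}

lemma my_measurable_B (B : ℝ → Ω → ℝ) {l r v : ℝ} (hv : v ∈ Set.Icc l r) :
    Measurable[pathSigma B l r] (B v) :=
  measurable_iff_comap_le.mpr
    (le_iSup₂ (f := fun (u : ℝ) (_ : u ∈ Set.Icc l r) =>
      MeasurableSpace.comap (B u) Real.measurableSpace) v hv)

lemma my_pathSigma_mono (B : ℝ → Ω → ℝ) {l r l' r' : ℝ} (h : Set.Icc l r ⊆ Set.Icc l' r') :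
    pathSigma B l r ≤ pathSigma B l' r' :=
  iSup₂_le fun u hu =>
    le_iSup₂ (f := fun (u : ℝ) (_ : u ∈ Set.Icc l' r') =>
      MeasurableSpace.comap (B u) Real.measurableSpace) u (h hu)

lemma my_pathSigma_le {mΩ : MeasurableSpace Ω} (B : ℝ → Ω → ℝ)
    (hBmeas : ∀ u : ℝ, Measurable (B u)) (l r : ℝ) :
    pathSigma B l r ≤ mΩ :=
  iSup₂_le fun u _ => measurable_iff_comap_le.mp (hBmeas u)

end PathSigma

/-- Let `B` be a standard Brownian motion on `[0,T]`.  For every `0 ≤ s ≤ t ≤ T` with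
`t > 0`, the conditional expectation of `B_s` given the path σ-algebra of `B` on `[t,T]`
is `E[B_s | F̄^B_{t,T}] = (s/t) · B_t` a.s. -/
theorem condexp_brownian_given_future_path
    {Ω : Type*} {mΩ : MeasurableSpace Ω} (μ : Measure Ω) [IsProbabilityMeasure μ]
    (T : ℝ) (hT : 0 < T)
    (B : ℝ → Ω → ℝ)
    (hBmeas : ∀ u : ℝ, Measurable (B u))
    (hB0 : ∀ ω, B 0 ω = 0)
    (hBcont : ∀ᵐ ω ∂μ, ContinuousOn (fun u => B u ω) (Set.Icc 0 T))
    (hBgauss : ∀ s t : ℝ, 0 ≤ s → s < t → t ≤ T →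
      μ.map (fun ω => B t ω - B s ω) = gaussianReal 0 (Real.toNNReal (t - s)))
    (hBindep : ∀ s t : ℝ, 0 ≤ s → s < t → t ≤ T →
      Indep (MeasurableSpace.comap (fun ω => B t ω - B s ω) Real.measurableSpace)
        (pathSigma B 0 s) μ) :
    ∀ s t : ℝ, 0 ≤ s → s ≤ t → t ≤ T → 0 < t →
      μ[B s | pathSigma B t T] =ᵐ[μ] fun ω => (s / t) * B t ω := by
  intro s t hs0 hst htT ht0
  classical
  have hm_le : pathSigma B t T ≤ mΩ := my_pathSigma_le B hBmeas t T
  haveI : IsFiniteMeasure (μ.trim hm_le) := isFiniteMeasure_trim hm_le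
  -- law of B t
  have hlawBt : μ.map (B t) = gaussianReal 0 t.toNNReal := by
    have h := hBgauss 0 t le_rfl ht0 htT
    have e : (fun ω => B t ω - B 0 ω) = B t := by
      funext ω; rw [hB0]; ring
    rwa [e, sub_zero] at h
  have htNN : t.toNNReal ≠ 0 := by simp [Real.toNNReal_eq_zero, not_le, ht0]
  have hInt_t : Integrable (B t) μ := by
    have h1 : Integrable (fun x : ℝ => x) (μ.map (B t)) := by
      rw [hlawBt]; exact my_integrable_id_gauss htNN
    exact (integrable_map_measure aestronglyMeasurable_id (hBmeas t).aemeasurable).mp h1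
  have hEBt : ∫ ω, B t ω ∂μ = 0 := by
    have h1 : ∫ x, x ∂(μ.map (B t)) = 0 := by rw [hlawBt]; exact my_integral_id_gauss htNN
    have h2 := integral_map (μ := μ) (φ := B t) (hBmeas t).aemeasurable
      (f := fun x : ℝ => x) aestronglyMeasurable_id
    exact h2.symm.trans h1
  rcases eq_or_lt_of_le hs0 with hs0' | hs
  · -- case s = 0
    have hB0' : B 0 = fun _ => (0 : ℝ) := funext hB0
    rw [← hs0', hB0']
    have : (fun ω : Ω => (0:ℝ) / t * B t ω) = fun _ => (0:ℝ) := by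
      funext ω; simp
    rw [this]
    have h0 : (fun _ : Ω => (0:ℝ)) = (0 : Ω → ℝ) := rfl
    rw [h0, condExp_zero]
  rcases eq_or_lt_of_le hst with hst' | hst'
  · -- case s = t
    rw [hst']
    have hSM : StronglyMeasurable[(pathSigma B t T)] (B t) :=
      (my_measurable_B B ⟨le_rfl, htT⟩).stronglyMeasurable
    rw [condExp_of_stronglyMeasurable hm_le hSM hInt_t]
    refine Filter.Eventually.of_forall fun ω => ?_
    rw [div_self ht0.ne']
    ring
  -- main case : 0 < s < t
  set c : ℝ := s / t with hc
  set X : Ω → ℝ := fun ω => B s ω - c * B t ω with hX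
  set V : Ω → ℝ := fun ω => B t ω - B s ω with hV
  have hVmeas : Measurable V := (hBmeas t).sub (hBmeas s)
  have hlawBs : μ.map (B s) = gaussianReal 0 s.toNNReal := by
    have h := hBgauss 0 s le_rfl hs (hst.trans htT)
    have e : (fun ω => B s ω - B 0 ω) = B s := by
      funext ω; rw [hB0]; ring
    rwa [e, sub_zero] at h
  have hlawV : μ.map V = gaussianReal 0 (t - s).toNNReal := hBgauss s t hs0 hst' htT
  have hsNN : s.toNNReal ≠ 0 := by simp [Real.toNNReal_eq_zero, not_le, hs]
  have hInt_s : Integrable (B s) μ := by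
    have h1 : Integrable (fun x : ℝ => x) (μ.map (B s)) := by
      rw [hlawBs]; exact my_integrable_id_gauss hsNN
    exact (integrable_map_measure aestronglyMeasurable_id (hBmeas s).aemeasurable).mp h1
  have hEBs : ∫ ω, B s ω ∂μ = 0 := by
    have h1 : ∫ x, x ∂(μ.map (B s)) = 0 := by rw [hlawBs]; exact my_integral_id_gauss hsNN
    have h2 := integral_map (μ := μ) (φ := B s) (hBmeas s).aemeasurable
      (f := fun x : ℝ => x) aestronglyMeasurable_id
    exact h2.symm.trans h1
  -- independence of B s and V
  have hUV : IndepFun (B s) V μ := by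
    rw [IndepFun_iff_Indep]
    have h := hBindep s t hs0 hst' htT
    exact my_indep_mono h.symm
      (measurable_iff_comap_le.mp (my_measurable_B B ⟨hs0, le_refl s⟩)) le_rfl
  -- independence of X and B t
  have hXBt : IndepFun X (B t) μ := by
    have hXY := my_indepFun_gauss μ (hBmeas s) hVmeas hUV hs (by linarith : (0:ℝ) < t - s)
      hlawBs hlawV
    have e1 : (fun ω => B s ω - (s / (s + (t - s))) * (B s ω + V ω)) = X := by
      funext ω
      have ht' : s + (t - s) = t := by ring
      simp only [hX, hV, hc, ht']
      ring
    have e2 : (fun ω => B s ω + V ω) = B t := by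
      funext ω; simp only [hV]; ring
    rwa [e1, e2] at hXY
  -- increments after t
  set Z : ℝ → Ω → ℝ := fun u ω => B u ω - B t ω with hZ
  have hZmeas : ∀ u, Measurable (Z u) := fun u => (hBmeas u).sub (hBmeas t)
  have hfin : ∀ F : Finset ℝ, ↑F ⊆ Set.Ioc t T →
      Indep (pathSigma B 0 t)
        (⨆ u ∈ F, MeasurableSpace.comap (Z u) Real.measurableSpace) μ := by
    intro F
    induction F using Finset.induction_on_max with
    | empty =>
      intro _
      simp only [Finset.notMem_empty, iSup_false, iSup_bot]
      exact indep_bot_right _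
    | insert a F' hlt IH =>
      intro hsub
      have haIoc : a ∈ Set.Ioc t T := hsub (by simp)
      have hsub' : ↑F' ⊆ Set.Ioc t T := fun x hx => hsub (by simp [hx])
      rw [Finset.iSup_insert]
      rcases F'.eq_empty_or_nonempty with hFe | hne
      · subst hFe
        simp only [Finset.notMem_empty, iSup_false, iSup_bot, sup_bot_eq]
        have h := hBindep t a ht0.le haIoc.1 haIoc.2
        exact my_indep_mono h.symm le_rfl le_rfl
      · set u' := F'.max' hne with hu'
        have hu'F : u' ∈ F' := F'.max'_mem hne
        have hu'Ioc : u' ∈ Set.Ioc t T := hsub' hu'F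
        have hu'a : u' < a := hlt u' hu'F
        set W : Ω → ℝ := fun ω => B a ω - B u' ω with hW
        have hWind : Indep (MeasurableSpace.comap W Real.measurableSpace)
            (pathSigma B 0 u') μ :=
          hBindep u' a (ht0.le.trans hu'Ioc.1.le) hu'a haIoc.2
        have hM_le : pathSigma B 0 t ≤ pathSigma B 0 u' :=
          my_pathSigma_mono B (Set.Icc_subset_Icc le_rfl hu'Ioc.1.le)
        have hσ_le : (⨆ v ∈ F', MeasurableSpace.comap (Z v) Real.measurableSpace)
            ≤ pathSigma B 0 u' := by
          refine iSup₂_le fun v hv => ?_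
          have hv0 : (0:ℝ) ≤ v := (ht0.trans (hsub' hv).1).le
          have hvu : v ≤ u' := F'.le_max' v hv
          exact measurable_iff_comap_le.mp
            ((my_measurable_B B ⟨hv0, hvu⟩).sub
              (my_measurable_B B ⟨ht0.le, hu'Ioc.1.le⟩))
        have h1 : Indep (pathSigma B 0 t)
            (⨆ v ∈ F', MeasurableSpace.comap (Z v) Real.measurableSpace) μ := IH hsub'
        have h2 : Indep (pathSigma B 0 t ⊔
              ⨆ v ∈ F', MeasurableSpace.comap (Z v) Real.measurableSpace)
            (MeasurableSpace.comap W Real.measurableSpace) μ :=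
          my_indep_mono hWind.symm (sup_le hM_le hσ_le) le_rfl
        have h3 : Indep (pathSigma B 0 t)
            ((⨆ v ∈ F', MeasurableSpace.comap (Z v) Real.measurableSpace) ⊔
              MeasurableSpace.comap W Real.measurableSpace) μ :=
          my_indep_sup_right (my_pathSigma_le B hBmeas 0 t)
            (iSup₂_le fun v _ => measurable_iff_comap_le.mp (hZmeas v))
            (measurable_iff_comap_le.mp ((hBmeas a).sub (hBmeas u'))) h1 h2
        refine my_indep_mono h3 le_rfl (sup_le ?_ le_sup_left)
        -- comap (Z a) ≤ σF' ⊔ comap W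
        have hza : Z a = fun ω => W ω + Z u' ω := by
          funext ω; simp only [hZ, hW]; ring
        have hmeas : Measurable[(⨆ v ∈ F', MeasurableSpace.comap (Z v)
            Real.measurableSpace) ⊔ MeasurableSpace.comap W Real.measurableSpace] (Z a) := by
          rw [hza]
          have hWm : Measurable[MeasurableSpace.comap W Real.measurableSpace] W :=
            measurable_iff_comap_le.mpr le_rfl
          have hZu'm : Measurable[MeasurableSpace.comap (Z u') Real.measurableSpace] (Z u') :=
            measurable_iff_comap_le.mpr le_rfl
          exact (hWm.mono le_sup_right le_rfl).add
            ((hZu'm.mono (le_trans (le_iSup₂ (f := fun (v : ℝ) (_ : v ∈ F') =>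
              MeasurableSpace.comap (Z v) Real.measurableSpace) u' hu'F) le_sup_left) le_rfl))
        exact measurable_iff_comap_le.mp hmeas
  -- independence of past and all future increments
  have hG_le : (⨆ u ∈ Set.Ioc t T, MeasurableSpace.comap (Z u) Real.measurableSpace) ≤ mΩ := iSup₂_le fun u _ => measurable_iff_comap_le.mp (hZmeas u)
  have hMG : Indep (pathSigma B 0 t) (⨆ u ∈ Set.Ioc t T, MeasurableSpace.comap (Z u) Real.measurableSpace) μ := by
    set ι := {F : Finset ℝ // ↑F ⊆ Set.Ioc t T}
    set mF : ι → MeasurableSpace Ω :=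
      fun F => ⨆ u ∈ F.1, MeasurableSpace.comap (Z u) Real.measurableSpace with hmF
    have h_each : ∀ F : ι, Indep (mF F) (pathSigma B 0 t) μ := fun F => (hfin F.1 F.2).symm
    have h_le : ∀ F : ι, mF F ≤ mΩ :=
      fun F => iSup₂_le fun u _ => measurable_iff_comap_le.mp (hZmeas u)
    have hdir : Directed (· ≤ ·) mF := by
      intro F F'
      refine ⟨⟨F.1 ∪ F'.1, ?_⟩, ?_, ?_⟩
      · intro x hx
        rcases Finset.mem_union.mp hx with h | h
        · exact F.2 h
        · exact F'.2 h
      · exact iSup₂_le fun u hu => le_iSup₂ (f := fun (u : ℝ) (_ : u ∈ F.1 ∪ F'.1) =>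
          MeasurableSpace.comap (Z u) Real.measurableSpace) u (Finset.mem_union_left _ hu)
      · exact iSup₂_le fun u hu => le_iSup₂ (f := fun (u : ℝ) (_ : u ∈ F.1 ∪ F'.1) =>
          MeasurableSpace.comap (Z u) Real.measurableSpace) u (Finset.mem_union_right _ hu)
    have hsup := indep_iSup_of_directed_le h_each h_le (my_pathSigma_le B hBmeas 0 t) hdir
    refine my_indep_mono hsup.symm le_rfl ?_
    refine iSup₂_le fun u hu => ?_
    refine le_trans ?_ (le_iSup mF ⟨{u}, by simpa using hu⟩)
    simp only [hmF]
    exact le_iSup₂ (f := fun (v : ℝ) (_ : v ∈ ({u} : Finset ℝ)) =>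
      MeasurableSpace.comap (Z v) Real.measurableSpace) u (Finset.mem_singleton_self u)
  -- pathSigma B t T ≤ comap (B t) ⊔ (⨆ u ∈ Set.Ioc t T, MeasurableSpace.comap (Z u) Real.measurableSpace)
  have hm_sub : (pathSigma B t T) ≤ MeasurableSpace.comap (B t) Real.measurableSpace ⊔ (⨆ u ∈ Set.Ioc t T, MeasurableSpace.comap (Z u) Real.measurableSpace) := by
    refine iSup₂_le fun u hu => ?_
    rcases eq_or_lt_of_le hu.1 with heq | hlt
    · rw [← heq]; exact le_sup_left
    · have hBu : B u = fun ω => Z u ω + B t ω := by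
        funext ω; simp only [hZ]; ring
      have hmeas : Measurable[MeasurableSpace.comap (B t) Real.measurableSpace ⊔ (⨆ u ∈ Set.Ioc t T, MeasurableSpace.comap (Z u) Real.measurableSpace)] (B u) := by
        rw [hBu]
        have hZm : Measurable[MeasurableSpace.comap (Z u) Real.measurableSpace] (Z u) :=
          measurable_iff_comap_le.mpr le_rfl
        have hBtm : Measurable[MeasurableSpace.comap (B t) Real.measurableSpace] (B t) :=
          measurable_iff_comap_le.mpr le_rfl
        have hcomap_le : MeasurableSpace.comap (Z u) Real.measurableSpace ≤ (⨆ u ∈ Set.Ioc t T, MeasurableSpace.comap (Z u) Real.measurableSpace) :=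
          le_iSup₂ (f := fun (v : ℝ) (_ : v ∈ Set.Ioc t T) =>
            MeasurableSpace.comap (Z v) Real.measurableSpace) u ⟨hlt, hu.2⟩
        exact (hZm.mono (le_trans hcomap_le le_sup_right) le_rfl).add
          (hBtm.mono le_sup_left le_rfl)
      exact measurable_iff_comap_le.mp hmeas
  -- final independence
  have hXle : MeasurableSpace.comap X Real.measurableSpace ≤ pathSigma B 0 t := by
    refine measurable_iff_comap_le.mp ?_
    exact (my_measurable_B B ⟨hs0, hst⟩).sub
      ((my_measurable_B B ⟨ht0.le, le_rfl⟩).const_mul c)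
  have hBtle : MeasurableSpace.comap (B t) Real.measurableSpace ≤ pathSigma B 0 t :=
    measurable_iff_comap_le.mp (my_measurable_B B ⟨ht0.le, le_rfl⟩)
  have h2 : Indep (MeasurableSpace.comap X Real.measurableSpace ⊔
      MeasurableSpace.comap (B t) Real.measurableSpace) (⨆ u ∈ Set.Ioc t T, MeasurableSpace.comap (Z u) Real.measurableSpace) μ :=
    my_indep_mono hMG (sup_le hXle hBtle) le_rfl
  have h1 : Indep (MeasurableSpace.comap X Real.measurableSpace)
      (MeasurableSpace.comap (B t) Real.measurableSpace) μ :=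
    (IndepFun_iff_Indep _ _ _).mp hXBt
  have h3 : Indep (MeasurableSpace.comap X Real.measurableSpace)
      (MeasurableSpace.comap (B t) Real.measurableSpace ⊔ (⨆ u ∈ Set.Ioc t T, MeasurableSpace.comap (Z u) Real.measurableSpace)) μ :=
    my_indep_sup_right (hXle.trans (my_pathSigma_le B hBmeas 0 t))
      (measurable_iff_comap_le.mp (hBmeas t)) hG_le h1 h2
  have hIndep : Indep (MeasurableSpace.comap X Real.measurableSpace) (pathSigma B t T) μ :=
    my_indep_mono h3 le_rfl hm_sub
  -- conditional expectation computation
  have hInt_cBt : Integrable (fun ω => c * B t ω) μ := hInt_t.const_mul c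
  have hInt_X : Integrable X μ := hInt_s.sub hInt_cBt
  have hEX : ∫ ω, X ω ∂μ = 0 := by
    rw [show X = fun ω => B s ω - c * B t ω from rfl]
    rw [integral_sub hInt_s hInt_cBt, integral_const_mul, hEBs, hEBt]
    ring
  have hXSM : StronglyMeasurable[MeasurableSpace.comap X Real.measurableSpace] X :=
    (measurable_iff_comap_le.mpr le_rfl :
      Measurable[MeasurableSpace.comap X Real.measurableSpace] X).stronglyMeasurable
  have hXcond : μ[X|(pathSigma B t T)] =ᵐ[μ] fun _ => μ[X] :=
    condExp_indep_eq (hXle.trans (my_pathSigma_le B hBmeas 0 t)) hm_le hXSM hIndep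
  set g : Ω → ℝ := fun ω => c * B t ω with hg
  have hgSM : StronglyMeasurable[(pathSigma B t T)] g :=
    ((my_measurable_B B ⟨le_rfl, htT⟩).const_mul c).stronglyMeasurable
  have hgcond : μ[g|(pathSigma B t T)] = g := condExp_of_stronglyMeasurable hm_le hgSM hInt_cBt
  have hdecomp : B s = X + g := by
    funext ω
    simp only [hX, hg, Pi.add_apply]
    ring
  rw [hdecomp]
  calc μ[X + g|(pathSigma B t T)] =ᵐ[μ] μ[X|(pathSigma B t T)] + μ[g|(pathSigma B t T)] := condExp_add hInt_X hInt_cBt _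
    _ =ᵐ[μ] g := by
      rw [hgcond]
      filter_upwards [hXcond] with ω hω
      simp only [Pi.add_apply, hω, hEX]
      ring
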